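/- Let n ≥ 2, m ≥ 3, k ≥ 1 be integers. The (n,m,k)-block graph, obtained from K_n by coalescing k pendant copies of K_m at each vertex of K_n, is singular if and only if k·(m-1)/(m-2) = n-1. -/

import Mathlib

open scoped Classical

/-- The `(n,m,k)`-block graph: at each vertex of `K_n`, `k` pendant copies of `K_m` are
coalesced (each copy contributing `m - 1` new vertices). -/
def nmkGraph (n m k : ℕ) : SimpleGraph (Fin n ⊕ Fin n × Fin k × Fin (m - 1)) :=
  SimpleGraph.fromRel fun x y =>
    match x, y with
    | .inl _, .inl _ => True
    | .inl i, .inr p => i = p.1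
    | .inr p, .inr q => p.1 = q.1 ∧ p.2.1 = q.2.1
    | _, _ => False

/-- Determinant of the adjacency matrix of a graph. -/
noncomputable def gdet {V : Type} [Fintype V] (G : SimpleGraph V) : ℝ :=
  Matrix.det (Matrix.of fun i j : V => if G.Adj i j then (1 : ℝ) else 0)

section Aux

open Matrix

/-- Determinant criterion for `J - c • I` on `Fin n`. -/
lemma detJc (n : ℕ) (hn : 1 ≤ n) (c : ℝ) (hc : c ≠ 0) :
    (Matrix.of (fun _ _ : Fin n => (1:ℝ)) - c • 1).det = 0 ↔ c = n := by
  rw [← Matrix.exists_mulVec_eq_zero_iff]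
  have hmv : ∀ v : Fin n → ℝ, (Matrix.of (fun _ _ : Fin n => (1:ℝ)) - c • 1) *ᵥ v
      = fun i => (∑ j, v j) - c * v i := by
    intro v; funext i
    simp [Matrix.sub_mulVec, Matrix.smul_mulVec, Matrix.one_mulVec, Matrix.mulVec,
      dotProduct, sub_mul, Finset.sum_sub_distrib, Matrix.one_apply, ite_mul,
      Finset.sum_ite_eq]
  constructor
  · rintro ⟨v, hv0, hv⟩
    rw [hmv] at hv
    set S := ∑ j, v j with hS
    have hvi : ∀ i, v i = S / c := by
      intro i
      have := congrFun hv i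
      simp only [Pi.zero_apply] at this
      field_simp
      linarith
    have hS0 : S ≠ 0 := by
      intro h
      apply hv0
      funext i
      simp [hvi i, h]
    have hsum : S = n * (S / c) := by
      conv_lhs => rw [hS]
      rw [Finset.sum_congr rfl fun i _ => hvi i]
      simp [mul_comm]
    field_simp at hsum
    have h2 : S * c = S * (n : ℝ) := by linear_combination S * hsum
    exact mul_left_cancel₀ hS0 h2
  · intro h
    refine ⟨fun _ => 1, ?_, ?_⟩
    · intro h0
      have := congrFun h0 ⟨0, hn⟩
      simpa using this
    · rw [hmv]
      funext i
      simp [h]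

/-- The leaf-block of the adjacency matrix. -/
noncomputable def Dm (n m k : ℕ) :
    Matrix (Fin n × Fin k × Fin (m-1)) (Fin n × Fin k × Fin (m-1)) ℝ :=
  Matrix.of fun p q => if p.1 = q.1 ∧ p.2.1 = q.2.1 ∧ p.2.2 ≠ q.2.2 then 1 else 0

/-- Explicit inverse of the leaf-block. -/
noncomputable def Em (n m k : ℕ) :
    Matrix (Fin n × Fin k × Fin (m-1)) (Fin n × Fin k × Fin (m-1)) ℝ :=
  Matrix.of fun p q => if p.1 = q.1 ∧ p.2.1 = q.2.1 then
    ((m:ℝ)-2)⁻¹ - (if p.2.2 = q.2.2 then 1 else 0) else 0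

noncomputable def Bm (n m k : ℕ) : Matrix (Fin n) (Fin n × Fin k × Fin (m-1)) ℝ :=
  Matrix.of fun i p => if i = p.1 then 1 else 0

noncomputable def Cm (n m k : ℕ) : Matrix (Fin n × Fin k × Fin (m-1)) (Fin n) ℝ :=
  Matrix.of fun p i => if p.1 = i then 1 else 0

noncomputable def A11 (n : ℕ) : Matrix (Fin n) (Fin n) ℝ :=
  Matrix.of fun i j => if i = j then 0 else 1

lemma hDE (n m k : ℕ) (hm : 3 ≤ m) : Dm n m k * Em n m k = 1 := by
  have hm2 : ((m:ℝ) - 2) ≠ 0 := by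
    have : (3:ℝ) ≤ (m:ℝ) := by exact_mod_cast hm
    linarith
  have hcard : ((m - 1 : ℕ) : ℝ) = (m:ℝ) - 1 := by
    rw [Nat.cast_sub (by omega)]; norm_num
  ext p q
  rw [Matrix.mul_apply]
  simp only [Dm, Em, Matrix.of_apply, Fintype.sum_prod_type]
  simp only [ite_and, ite_mul, zero_mul, one_mul, Finset.sum_ite_irrel, Finset.sum_const_zero,
    Finset.sum_ite_eq, Finset.mem_univ, if_true]
  by_cases h1 : p.1 = q.1
  · by_cases h2 : p.2.1 = q.2.1
    · simp only [h1, h2, eq_self_iff_true, if_true]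
      have step : ∀ x : Fin (m-1),
          (if p.2.2 ≠ x then ((m:ℝ)-2)⁻¹ - (if x = q.2.2 then 1 else 0) else 0)
          = (((m:ℝ)-2)⁻¹ - (if x = q.2.2 then 1 else 0))
            - (if p.2.2 = x then ((m:ℝ)-2)⁻¹ - (if x = q.2.2 then 1 else 0) else 0) := by
        intro x; by_cases hx : p.2.2 = x <;> simp [hx]
      rw [Finset.sum_congr rfl fun x _ => step x, Finset.sum_sub_distrib,
        Finset.sum_sub_distrib, Finset.sum_const, Finset.sum_ite_eq, Finset.sum_ite_eq']
      simp only [Finset.mem_univ, if_true, Finset.card_univ, Fintype.card_fin,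
        nsmul_eq_mul, hcard, Matrix.one_apply, Prod.ext_iff, h1, h2, true_and]
      by_cases hq : p.2.2 = q.2.2 <;> simp [hq] <;> field_simp <;> ring
    · simp only [h2, if_false]
      simp [Matrix.one_apply, Prod.ext_iff, h2]
  · simp [h1, Matrix.one_apply, Prod.ext_iff]

lemma hDsymm (n m k : ℕ) : (Dm n m k)ᵀ = Dm n m k := by
  ext p q
  simp only [Dm, Matrix.transpose_apply, Matrix.of_apply]
  refine if_congr ?_ rfl rfl
  constructor
  · rintro ⟨a, b, c⟩; exact ⟨a.symm, b.symm, c.symm⟩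
  · rintro ⟨a, b, c⟩; exact ⟨a.symm, b.symm, c.symm⟩

lemma hEsymm (n m k : ℕ) : (Em n m k)ᵀ = Em n m k := by
  ext p q
  simp only [Em, Matrix.transpose_apply, Matrix.of_apply]
  have hc : (q.1 = p.1 ∧ q.2.1 = p.2.1) ↔ (p.1 = q.1 ∧ p.2.1 = q.2.1) := by
    constructor <;> rintro ⟨a, b⟩ <;> exact ⟨a.symm, b.symm⟩
  have hb : (if q.2.2 = p.2.2 then (1:ℝ) else 0) = if p.2.2 = q.2.2 then 1 else 0 := by
    by_cases h : p.2.2 = q.2.2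
    · simp [h]
    · rw [if_neg (fun hh => h hh.symm), if_neg h]
  exact if_congr hc (by rw [hb]) rfl

lemma hED (n m k : ℕ) (hm : 3 ≤ m) : Em n m k * Dm n m k = 1 := by
  have h1 : (Dm n m k * Em n m k)ᵀ = 1 := by rw [hDE n m k hm]; simp
  rwa [Matrix.transpose_mul, hDsymm, hEsymm] at h1

lemma hBE (n m k : ℕ) (hm : 3 ≤ m) :
    Bm n m k * Em n m k = Matrix.of fun i q => if i = q.1 then ((m:ℝ)-2)⁻¹ else 0 := by
  have hm2 : ((m:ℝ) - 2) ≠ 0 := by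
    have : (3:ℝ) ≤ (m:ℝ) := by exact_mod_cast hm
    linarith
  have hcard : ((m - 1 : ℕ) : ℝ) = (m:ℝ) - 1 := by
    rw [Nat.cast_sub (by omega)]; norm_num
  ext i q
  rw [Matrix.mul_apply]
  simp only [Bm, Em, Matrix.of_apply, Fintype.sum_prod_type]
  simp only [ite_and, ite_mul, zero_mul, one_mul, Finset.sum_ite_irrel, Finset.sum_const_zero,
    Finset.sum_ite_eq, Finset.sum_ite_eq', Finset.mem_univ, if_true]
  by_cases h1 : i = q.1
  · simp only [h1, eq_self_iff_true, if_true]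
    rw [Finset.sum_sub_distrib, Finset.sum_const, Finset.sum_ite_eq']
    simp only [Finset.mem_univ, if_true, Finset.card_univ, Fintype.card_fin, nsmul_eq_mul, hcard]
    field_simp; ring
  · simp [h1]

lemma hBEC (n m k : ℕ) (hm : 3 ≤ m) :
    Bm n m k * Em n m k * Cm n m k = ((k:ℝ) * ((m:ℝ)-1) / ((m:ℝ)-2)) • 1 := by
  have hcard : ((m - 1 : ℕ) : ℝ) = (m:ℝ) - 1 := by
    rw [Nat.cast_sub (by omega)]; norm_num
  rw [hBE n m k hm]
  ext i i'
  rw [Matrix.mul_apply]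
  simp only [Cm, Matrix.of_apply, Fintype.sum_prod_type]
  simp only [ite_mul, zero_mul, one_mul, mul_ite, mul_zero, mul_one,
    Finset.sum_ite_irrel, Finset.sum_const_zero, Finset.sum_ite_eq, Finset.sum_ite_eq',
    Finset.mem_univ, if_true, Finset.sum_const, Finset.card_univ, Fintype.card_fin,
    nsmul_eq_mul]
  by_cases h1 : i = i' <;>
    simp [h1, Matrix.smul_apply, Matrix.one_apply, hcard, div_eq_mul_inv] <;> ring

lemma hA (n m k : ℕ) :
    (Matrix.of fun i j => if (nmkGraph n m k).Adj i j then (1:ℝ) else 0) =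
      Matrix.fromBlocks (A11 n) (Bm n m k) (Cm n m k) (Dm n m k) := by
  ext i j
  rcases i with i | p <;> rcases j with j | q <;>
    simp only [Matrix.of_apply, nmkGraph, SimpleGraph.fromRel_adj, Matrix.fromBlocks,
      Sum.elim_inl, Sum.elim_inr, A11, Bm, Cm, Dm, ne_eq, Sum.inl.injEq, Sum.inr.injEq,
      or_self]
  · by_cases h : i = j <;> simp [h]
  · by_cases h : i = q.1 <;> simp [h]
  · by_cases h : p.1 = j
    · simp [h]
    · have hcond : ¬(¬Sum.inr p = Sum.inl j ∧ (False ∨ j = p.1)) := by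
        rintro ⟨-, h' | h'⟩
        · exact h'
        · exact h h'.symm
      rw [if_neg hcond, if_neg h]
  · have hpq : (p = q) ↔ (p.1 = q.1 ∧ p.2.1 = q.2.1 ∧ p.2.2 = q.2.2) := by
      simp [Prod.ext_iff]
    refine if_congr ?_ rfl rfl
    rw [hpq]; tauto

end Aux

/-- An `(n,m,k)`-block graph is singular if and only if `k (m-1)/(m-2) = n - 1`. -/
theorem stmt_17 (n m k : ℕ) (hn : 2 ≤ n) (hm : 3 ≤ m) (hk : 1 ≤ k) :
    gdet (nmkGraph n m k) = 0 ↔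
      (k : ℝ) * ((m : ℝ) - 1) / ((m : ℝ) - 2) = (n : ℝ) - 1 := by
  have hm3 : (3:ℝ) ≤ (m:ℝ) := by exact_mod_cast hm
  have hk1 : (1:ℝ) ≤ (k:ℝ) := by exact_mod_cast hk
  have hm2 : ((m:ℝ) - 2) ≠ 0 := by linarith
  set α : ℝ := (k:ℝ) * ((m:ℝ)-1) / ((m:ℝ)-2) with hα
  have hα0 : 0 ≤ α := by
    apply div_nonneg
    · nlinarith
    · linarith
  letI : Invertible (Dm n m k) := ⟨Em n m k, hED n m k hm, hDE n m k hm⟩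
  have hgdet : gdet (nmkGraph n m k)
      = (Matrix.fromBlocks (A11 n) (Bm n m k) (Cm n m k) (Dm n m k)).det := by
    unfold gdet
    rw [hA n m k]
    congr!
  rw [hgdet, Matrix.det_fromBlocks₂₂ (A11 n) (Bm n m k) (Cm n m k) (Dm n m k)]
  have hinv : ⅟(Dm n m k) = Em n m k := rfl
  rw [hinv, hBEC n m k hm]
  have hA11 : A11 n - ((k:ℝ) * ((m:ℝ)-1) / ((m:ℝ)-2)) • (1 : Matrix (Fin n) (Fin n) ℝ)
      = Matrix.of (fun _ _ : Fin n => (1:ℝ)) - (1+α) • 1 := by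
    ext i j
    by_cases h : i = j <;>
      simp [A11, Matrix.one_apply, h, Matrix.sub_apply, Matrix.smul_apply] <;> ring
  rw [hA11]
  have hdetD : (Dm n m k).det ≠ 0 := (Matrix.isUnit_det_of_invertible (Dm n m k)).ne_zero
  have hc : (1+α) ≠ 0 := by linarith
  rw [mul_eq_zero, detJc n (by omega) (1+α) hc]
  constructor
  · rintro (h | h)
    · exact absurd h hdetD
    · linarith
  · intro h
    right
    linarith
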